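/- For a ≥ 0 and d ≥ 1, the (d+1)×(d+1) determinant D_{a,d} = det[(a+i+j)!]_{0≤i,j≤d} satisfies D_{a,d} = a!·d!·D_{a+1,d-1}. -/

import Mathlib

open Nat Matrix

/-- For `a ≥ 0` and `d ≥ 1`, the `(d+1)×(d+1)` Hankel determinant
`D_{a,d} = det[(a+i+j)!]` satisfies `D_{a,d} = a! * d! * D_{a+1,d-1}`. -/
theorem hankel_factorial_det_step (a d : ℕ) (hd : 1 ≤ d) :
    Matrix.det (Matrix.of fun i j : Fin (d + 1) => ((a + i + j)! : ℝ)) =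
      (a ! : ℝ) * d ! *
        Matrix.det (Matrix.of fun i j : Fin d => ((a + 1 + i + j)! : ℝ)) := by
  set M : Matrix (Fin (d+1)) (Fin (d+1)) ℝ :=
    Matrix.of fun i j => ((a + i + j)! : ℝ) with hM
  -- unit upper-bidiagonal column-operation matrix
  set T : Matrix (Fin (d+1)) (Fin (d+1)) ℝ := Matrix.of fun k j =>
    Fin.cases (if k = 0 then (1:ℝ) else 0)
      (fun j' => if k = j'.succ then (1:ℝ)
        else if k = j'.castSucc then -((a:ℝ)+j'+1) else 0) j with hT
  have hTdet : T.det = 1 := by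
    rw [Matrix.det_of_upperTriangular]
    · apply Finset.prod_eq_one
      intro j _
      cases j using Fin.cases with
      | zero => simp [hT]
      | succ j' => simp [hT]
    · intro i j hij
      cases j using Fin.cases with
      | zero =>
        have hi : i ≠ 0 := by
          intro h; rw [h] at hij; exact absurd hij (lt_irrefl _)
        simp [hT, hi]
      | succ j' =>
        have h1 : i ≠ j'.succ := by
          intro h; rw [h] at hij; exact absurd hij (lt_irrefl _)
        have h2 : i ≠ j'.castSucc := by
          intro h
          have : j'.castSucc < j'.succ := Fin.castSucc_lt_succ (i := j')
          rw [h] at hij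
          exact absurd (hij.trans this) (lt_irrefl _)
        simp [hT, h1, h2]
  have hN0 : ∀ i : Fin (d+1), (M * T) i 0 = ((a + i)! : ℝ) := by
    intro i
    rw [Matrix.mul_apply]
    simp [hT, hM, mul_ite]
  have hNs : ∀ (i : Fin (d+1)) (j' : Fin d),
      (M * T) i j'.succ = (i : ℝ) * ((a + i + j')! : ℝ) := by
    intro i j'
    rw [Matrix.mul_apply]
    have key : ∀ k : Fin (d+1), M i k * T k j'.succ =
        (if k = j'.succ then M i k else 0) +
          (if k = j'.castSucc then -((a:ℝ)+j'+1) * M i k else 0) := by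
      intro k
      have hne : j'.castSucc ≠ j'.succ := (Fin.castSucc_lt_succ (i := j')).ne
      simp only [hT, Matrix.of_apply, Fin.cases_succ]
      rcases eq_or_ne k j'.succ with h1 | h1
      · subst h1
        rw [if_pos rfl, if_pos rfl, if_neg (Ne.symm hne), add_zero, mul_one]
      · rw [if_neg h1, if_neg h1, zero_add]
        rcases eq_or_ne k j'.castSucc with h2 | h2
        · subst h2
          rw [if_pos rfl, if_pos rfl]
          ring
        · rw [if_neg h2, if_neg h2, mul_zero]
    rw [Finset.sum_congr rfl (fun k _ => key k), Finset.sum_add_distrib]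
    rw [Finset.sum_ite_eq' Finset.univ j'.succ, Finset.sum_ite_eq' Finset.univ j'.castSucc]
    simp only [Finset.mem_univ, if_true]
    simp only [hM, Matrix.of_apply, Fin.val_succ, Fin.coe_castSucc]
    have harg : a + (i : ℕ) + ((j' : ℕ) + 1) = (a + i + j') + 1 := by omega
    rw [harg, Nat.factorial_succ]
    push_cast
    ring
  have hdet : M.det = (M * T).det := by
    rw [Matrix.det_mul, hTdet, mul_one]
  rw [hdet, Matrix.det_succ_row_zero, Fin.sum_univ_succ]
  have hzero : ∀ j' : Fin d,
      (-1 : ℝ) ^ ((j'.succ : Fin (d+1)) : ℕ) * (M * T) 0 j'.succ *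
        ((M * T).submatrix Fin.succ j'.succ.succAbove).det = 0 := by
    intro j'
    rw [hNs 0 j']
    simp
  rw [Finset.sum_congr rfl (fun j' _ => hzero j'), Finset.sum_const_zero, add_zero]
  rw [hN0 0]
  have hsub : ((M * T).submatrix Fin.succ (Fin.succAbove 0)) =
      Matrix.of (fun i j : Fin d => ((i : ℝ) + 1) * ((a + 1 + i + j)! : ℝ)) := by
    ext i j
    simp only [Matrix.submatrix_apply, Fin.succAbove_zero]
    rw [hNs (Fin.succ i) j]
    have harg : a + ((Fin.succ i : Fin (d+1)) : ℕ) + (j : ℕ) = a + 1 + i + j := by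
      simp [Fin.val_succ]; omega
    rw [harg]
    simp only [Matrix.of_apply, Fin.val_succ]
    push_cast
    ring
  rw [hsub]
  have hmc := Matrix.det_mul_column (fun i : Fin d => ((i : ℝ) + 1))
    (Matrix.of fun i j : Fin d => ((a + 1 + i + j)! : ℝ))
  simp only [Matrix.of_apply] at hmc
  rw [hmc]
  have hprod : (∏ i : Fin d, ((i : ℝ) + 1)) = (d ! : ℝ) := by
    rw [Fin.prod_univ_eq_prod_range (fun i => ((i : ℝ) + 1)) d]
    rw [← Finset.prod_range_add_one_eq_factorial d]
    push_cast
    rfl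
  rw [hprod]
  simp only [Fin.val_zero, pow_zero, Nat.add_zero, one_mul]
  rw [mul_assoc]
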